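/- A subset S ⊆ ℕⁿ is a proportionally modular affine semigroup if and only if there exist two linear functions with integer coefficients f(x) = f₁x₁+⋯+fₙxₙ and d(x) = d₁x₁+⋯+dₙxₙ with f₁,…,fₙ ≥ 0, and an integer b > 0, such that S = ⋃_{i∈ℕ} (F_i⁺ ∩ D_i⁻) ∩ ℕⁿ, where F_i⁺ = {x ∈ ℝⁿ : f(x) ≥ ib} and D_i⁻ = {x ∈ ℝⁿ : d(x) ≤ ib}. -/
import Mathlib

lemma aux_emod_le {b a : ℤ} (hb : 0 < b) (ha : 0 ≤ a) : a % b ≤ a := by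
  rcases lt_or_ge a b with h | h
  · rw [Int.emod_eq_of_lt ha h]
  · exact le_trans (Int.emod_lt_of_pos a hb).le h

lemma aux_key {b : ℤ} (hb : 0 < b) {F : ℤ} (hF : 0 ≤ F) (G : ℤ) :
    F % b ≤ G ↔ ∃ i : ℕ, (i : ℤ) * b ≤ F ∧ F - G ≤ (i : ℤ) * b := by
  constructor
  · intro h
    refine ⟨(F / b).toNat, ?_, ?_⟩ <;>
    · have hq : 0 ≤ F / b := Int.ediv_nonneg hF hb.le
      rw [Int.toNat_of_nonneg hq]
      have h1 : b * (F / b) + F % b = F := Int.mul_ediv_add_emod F b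
      have h2 : 0 ≤ F % b := Int.emod_nonneg F hb.ne'
      rw [mul_comm]; linarith
  · rintro ⟨i, h1, h2⟩
    have h3 : (F - (i : ℤ) * b) % b = F % b := by
      simp [Int.sub_emod, Int.mul_emod_left]
    calc F % b = (F - (i : ℤ) * b) % b := h3.symm
      _ ≤ F - (i : ℤ) * b := aux_emod_le hb (by linarith)
      _ ≤ G := by linarith

theorem stmt0 (n : ℕ) (S : Set (Fin n → ℕ)) :
    (∃ (f g : Fin n → ℤ) (b : ℤ), 0 < b ∧
      S = {x : Fin n → ℕ | (∑ i, f i * (x i : ℤ)) % b ≤ ∑ i, g i * (x i : ℤ)}) ↔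
    (∃ (f d : Fin n → ℤ) (b : ℤ), (∀ i, 0 ≤ f i) ∧ 0 < b ∧
      S = {x : Fin n → ℕ | ∃ i : ℕ, (i : ℤ) * b ≤ ∑ j, f j * (x j : ℤ) ∧
        ∑ j, d j * (x j : ℤ) ≤ (i : ℤ) * b}) := by
  constructor
  · rintro ⟨f, g, b, hb, rfl⟩
    refine ⟨fun i => f i % b, fun i => f i % b - g i, b,
      fun i => Int.emod_nonneg _ hb.ne', hb, ?_⟩
    ext x
    have hFnn : 0 ≤ ∑ j, (f j % b) * (x j : ℤ) :=
      Finset.sum_nonneg fun j _ =>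
        mul_nonneg (Int.emod_nonneg _ hb.ne') (Int.natCast_nonneg _)
    have hmod : (∑ j, (f j % b) * (x j : ℤ)) % b = (∑ j, f j * (x j : ℤ)) % b := by
      rw [Finset.sum_int_mod, Finset.sum_int_mod _ _ (fun j => f j * (x j : ℤ))]
      congr 1
      refine Finset.sum_congr rfl fun j _ => ?_
      rw [Int.mul_emod, Int.emod_emod_of_dvd _ dvd_rfl, ← Int.mul_emod]
    have hd : ∑ j, (f j % b - g j) * (x j : ℤ)
        = (∑ j, (f j % b) * (x j : ℤ)) - ∑ j, g j * (x j : ℤ) := by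
      rw [← Finset.sum_sub_distrib]
      exact Finset.sum_congr rfl fun j _ => by ring
    simp only [Set.mem_setOf_eq, hd, ← hmod]
    exact aux_key hb hFnn _
  · rintro ⟨f, d, b, hf, hb, rfl⟩
    refine ⟨f, fun i => f i - d i, b, hb, ?_⟩
    ext x
    have hFnn : 0 ≤ ∑ j, f j * (x j : ℤ) :=
      Finset.sum_nonneg fun j _ => mul_nonneg (hf j) (Int.natCast_nonneg _)
    have hg : ∑ j, (f j - d j) * (x j : ℤ)
        = (∑ j, f j * (x j : ℤ)) - ∑ j, d j * (x j : ℤ) := by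
      rw [← Finset.sum_sub_distrib]
      exact Finset.sum_congr rfl fun j _ => by ring
    simp only [Set.mem_setOf_eq, hg]
    rw [aux_key hb hFnn]
    simp
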